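/- Let d be a positive integer and s ∈ ℂ, and set λ = d − 1. Consider the Fock realization operators on ℂ[z], with D = d/dz and Z = multiplication by z: H = (λ − (2/3)s + 1)·id − 2ZD, E = (2 − 2s + λ)·D − 2ZD², F = (2/3)(λZ − Z²D). Then the d-dimensional subspace V = {P ∈ ℂ[z] : the d-th derivative of P is 0} (the polynomials of degree less than d) is invariant under H, E and F, so that V carries a d-dimensional representation of the finite W algebra W₃⁽²⁾. -/
import Mathlib

open Polynomial

lemma iter_deriv_zero_iff (d : ℕ) (Q : Polynomial ℂ) :
    derivative^[d] Q = 0 ↔ ∀ n, Q.coeff (n + d) = 0 := by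
  constructor
  · intro h n
    have h1 := congrArg (fun q => Polynomial.coeff q n) h
    simp only [coeff_iterate_derivative, coeff_zero, nsmul_eq_mul] at h1
    have h2 : ((n + d).descFactorial d : ℂ) ≠ 0 := by
      rw [Nat.cast_ne_zero, ← Nat.pos_iff_ne_zero, Nat.pos_iff_ne_zero,
        Ne, Nat.descFactorial_eq_zero_iff_lt]
      omega
    exact (mul_eq_zero.mp h1).resolve_left h2
  · intro h
    ext n
    simp [coeff_iterate_derivative, h n]

/-- The `d`-dimensional subspace `V = {P ∈ ℂ[z] : P⁽ᵈ⁾ = 0}` of polynomials of degree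
less than `d` is invariant under the Fock realization operators `H`, `E`, `F` of the
finite W algebra `W₃⁽²⁾` with parameter `λ = d - 1`. -/
theorem fock_realization_W3_2_invariant_subspace
    (d : ℕ) (hd : 0 < d) (s : ℂ)
    (lam : ℂ) (hlam : lam = (d : ℂ) - 1)
    (D Z H E F : Module.End ℂ (Polynomial ℂ))
    (hD : D = (Polynomial.derivative : Polynomial ℂ →ₗ[ℂ] Polynomial ℂ))
    (hZ : Z = LinearMap.mulLeft ℂ (Polynomial.X : Polynomial ℂ))
    (hH : H = (lam - (2/3 : ℂ) * s + 1) • (1 : Module.End ℂ (Polynomial ℂ))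
        - (2 : ℂ) • (Z * D))
    (hE : E = (2 - 2 * s + lam) • D - (2 : ℂ) • (Z * D * D))
    (hF : F = (2/3 : ℂ) • (lam • Z - Z * Z * D)) :
    ∀ P : Polynomial ℂ, (D ^ d) P = 0 →
      (D ^ d) (H P) = 0 ∧ (D ^ d) (E P) = 0 ∧ (D ^ d) (F P) = 0 := by
  obtain ⟨e, rfl⟩ : ∃ e, d = e + 1 := ⟨d - 1, by omega⟩
  subst hD hZ hH hE hF hlam
  intro P hP
  have hpow : ∀ Q : Polynomial ℂ,
      ((Polynomial.derivative : Polynomial ℂ →ₗ[ℂ] Polynomial ℂ) ^ (e + 1)) Q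
        = derivative^[e + 1] Q := fun Q => Module.End.pow_apply _ _ _
  rw [hpow, iter_deriv_zero_iff] at hP
  simp only [hpow, iter_deriv_zero_iff, LinearMap.sub_apply, LinearMap.smul_apply,
    Module.End.one_apply, Module.End.mul_apply, LinearMap.mulLeft_apply]
  refine ⟨fun n => ?_, fun n => ?_, fun n => ?_⟩
  · -- H
    have h1 := hP n
    simp only [coeff_sub, coeff_smul, smul_eq_mul, show n + (e + 1) = (n + e) + 1 from rfl,
      coeff_X_mul, coeff_derivative, h1]
    rw [show (n + e) + 1 = n + (e + 1) from rfl, h1]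
    ring
  · -- E
    have h1 := hP (n + 1)
    rw [show n + 1 + (e + 1) = n + (e + 1) + 1 by ring] at h1
    simp only [coeff_sub, coeff_smul, smul_eq_mul, coeff_derivative,
      show n + (e + 1) = (n + e) + 1 from rfl, coeff_X_mul]
    rw [show n + e + 1 + 1 = n + (e + 1) + 1 from rfl, h1]
    ring
  · -- F
    simp only [coeff_smul, smul_eq_mul, coeff_sub, coeff_smul,
      show n + (e + 1) = (n + e) + 1 from rfl, coeff_X_mul]
    rcases n with _ | m
    · -- n = 0 : top coefficient, uses lam = d - 1
      rcases e with _ | f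
      · simp [mul_coeff_zero]
      · simp only [Nat.zero_add, coeff_X_mul, coeff_derivative]
        push_cast
        ring
    · -- n = m + 1 : all coefficients vanish
      have h1 := hP m
      rw [show m + (e + 1) = (m + 1) + e from by ring] at h1
      rw [show (m + 1) + e = (m + e) + 1 from by ring, coeff_X_mul, coeff_derivative,
        show (m + e) + 1 = (m + 1) + e from by ring, h1]
      ring
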